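/- Let x ∈ ℝⁿ and for q ≥ 0 define L_{x,1}(q) = log λ₁(ℤ^{n+1}, C_x(e^q)), where C_x(e^q) = { y ∈ ℝ^{n+1} : |y_i| ≤ 1 for 1 ≤ i ≤ n+1, |y·(1,x)| ≤ e^{-q} } and λ₁ is the first successive minimum. Then liminf_{q→∞} L_{x,1}(q)/q = 1/(1 + ω(x)). -/

import Mathlib

/-- Distance from a real number to the nearest integer. -/
noncomputable def nint (y : ℝ) : ℝ := |y - round y|

/-- Maximum norm of an integer vector. -/
noncomputable def maxNorm {n : ℕ} (q : Fin n → ℤ) : ℝ :=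
  ((Finset.univ.sup fun i => (q i).natAbs : ℕ) : ℝ)

/-- Scalar product of a real vector with an integer vector. -/
noncomputable def dotIZ {n : ℕ} (x : Fin n → ℝ) (q : Fin n → ℤ) : ℝ :=
  ∑ i, x i * (q i : ℝ)

/-- The set `DI_n(ε)` of `ε`-Dirichlet-improvable points: for all sufficiently large
`Q > 1` there is a nonzero integer vector `q` with `|q| ≤ Q` and `⟨x·q⟩ ≤ ε Q^{-n}`. -/
def DIset (n : ℕ) (ε : ℝ) : Set (Fin n → ℝ) :=
  {x | ∃ Q₀ : ℝ, ∀ Q : ℝ, Q₀ ≤ Q → 1 < Q →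
    ∃ q : Fin n → ℤ, q ≠ 0 ∧ maxNorm q ≤ Q ∧ nint (dotIZ x q) ≤ ε * Q ^ (-(n : ℝ))}

/-- The set of Dirichlet improvable points. -/
def DI (n : ℕ) : Set (Fin n → ℝ) := ⋃ ε ∈ Set.Ioo (0 : ℝ) 1, DIset n ε

/-- The set of badly approximable points. -/
def Bad (n : ℕ) : Set (Fin n → ℝ) :=
  {x | ∃ ε ∈ Set.Ioo (0 : ℝ) 1, ∀ q : Fin n → ℤ, q ≠ 0 →
    ε * (maxNorm q) ^ (-(n : ℝ)) ≤ nint (dotIZ x q)}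

/-- The set of singular points. -/
def Sing (n : ℕ) : Set (Fin n → ℝ) := ⋂ ε ∈ Set.Ioo (0 : ℝ) 1, DIset n ε

/-- `x` admits approximations with exponent `w` for arbitrarily large `Q`. -/
def HasExp {n : ℕ} (x : Fin n → ℝ) (w : ℝ) : Prop :=
  ∀ Q₀ : ℝ, ∃ Q : ℝ, Q₀ < Q ∧ 1 < Q ∧
    ∃ q : Fin n → ℤ, q ≠ 0 ∧ maxNorm q ≤ Q ∧ nint (dotIZ x q) ≤ Q ^ (-w)

/-- The Diophantine exponent `ω(x) ∈ [n, ∞]`, valued in `ENNReal`. -/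
noncomputable def omegaExp {n : ℕ} (x : Fin n → ℝ) : ENNReal :=
  sSup (ENNReal.ofReal '' {w : ℝ | 0 < w ∧ HasExp x w})
open scoped Pointwise

/-- The convex body `C_x(e^q)` in `ℝ^{n+1}`. -/
def bodyC {n : ℕ} (x : Fin n → ℝ) (q : ℝ) : Set (Fin (n + 1) → ℝ) :=
  {y | (∀ i, |y i| ≤ 1) ∧ |∑ i, y i * (Matrix.vecCons (1 : ℝ) x) i| ≤ Real.exp (-q)}

/-- The first successive minimum of the lattice `ℤ^{n+1}` with respect to a body `C`. -/
noncomputable def lambda1 {n : ℕ} (C : Set (Fin (n + 1) → ℝ)) : ℝ :=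
  sInf {t : ℝ | 0 < t ∧ ∃ v : Fin (n + 1) → ℤ, v ≠ 0 ∧ (fun i => (v i : ℝ)) ∈ t • (C : Set (Fin (n + 1) → ℝ))}


/-- `L_{x,1}(q) = log λ₁(ℤ^{n+1}, C_x(e^q))`. -/
noncomputable def Lx1 {n : ℕ} (x : Fin n → ℝ) (q : ℝ) : ℝ :=
  Real.log (lambda1 (bodyC x q))


section AuxLemmas

open Filter

variable {n : ℕ}

lemma natAbs_cast_real (m : ℤ) : ((m.natAbs : ℕ) : ℝ) = |(m:ℝ)| := by
  rw [Nat.cast_natAbs, Int.cast_abs]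

lemma nint_le (y : ℝ) (m : ℤ) : nint y ≤ |y - m| := round_le y m

lemma maxNorm_le_iff (q : Fin n → ℤ) (c : ℝ) (hc : 0 ≤ c) :
    maxNorm q ≤ c ↔ ∀ i, |(q i : ℝ)| ≤ c := by
  unfold maxNorm
  rw [← Nat.le_floor_iff hc, Finset.sup_le_iff]
  constructor
  · intro h i
    have := h i (Finset.mem_univ i)
    rw [Nat.le_floor_iff hc] at this
    rwa [natAbs_cast_real] at this
  · intro h i _
    rw [Nat.le_floor_iff hc, natAbs_cast_real]
    exact h i

lemma abs_le_maxNorm (q : Fin n → ℤ) (i : Fin n) : |(q i : ℝ)| ≤ maxNorm q := by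
  rw [← natAbs_cast_real, maxNorm, Nat.cast_le]
  exact Finset.le_sup (f := fun i => (q i).natAbs) (Finset.mem_univ i)

lemma abs_dotIZ_le (x : Fin n → ℝ) (q : Fin n → ℤ) :
    |dotIZ x q| ≤ (∑ i, |x i|) * maxNorm q := by
  unfold dotIZ
  calc |∑ i, x i * (q i : ℝ)| ≤ ∑ i, |x i * (q i : ℝ)| := Finset.abs_sum_le_sum_abs _ _
    _ ≤ ∑ i, |x i| * maxNorm q := by
        refine Finset.sum_le_sum fun i _ => ?_
        rw [abs_mul]
        exact mul_le_mul_of_nonneg_left (abs_le_maxNorm q i) (abs_nonneg _)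
    _ = (∑ i, |x i|) * maxNorm q := by rw [Finset.sum_mul]

noncomputable def dotT (x : Fin n → ℝ) (v : Fin (n+1) → ℤ) : ℝ :=
  ∑ i, ((v i : ℝ)) * Matrix.vecCons (1:ℝ) x i

lemma dotT_eq (x : Fin n → ℝ) (v : Fin (n+1) → ℤ) :
    dotT x v = (v 0 : ℝ) + ∑ i, (v i.succ : ℝ) * x i := by
  unfold dotT
  rw [Fin.sum_univ_succ]
  simp [Matrix.cons_val_zero, Matrix.cons_val_succ]

def Sset (x : Fin n → ℝ) (q : ℝ) : Set ℝ :=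
  {t | 0 < t ∧ ∃ v : Fin (n+1) → ℤ, v ≠ 0 ∧ (∀ i, |(v i : ℝ)| ≤ t) ∧ |dotT x v| ≤ t * Real.exp (-q)}

lemma mem_smul_body_iff {x : Fin n → ℝ} {q t : ℝ} (ht : 0 < t) (v : Fin (n+1) → ℤ) :
    (fun i => (v i : ℝ)) ∈ t • bodyC x q ↔ (∀ i, |(v i:ℝ)| ≤ t) ∧ |dotT x v| ≤ t * Real.exp (-q) := by
  rw [Set.mem_smul_set_iff_inv_smul_mem₀ ht.ne']
  show ((∀ i, |t⁻¹ * (v i:ℝ)| ≤ 1) ∧ _) ↔ _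
  have h1 : ∀ i, (|t⁻¹ * (v i : ℝ)| ≤ 1 ↔ |(v i:ℝ)| ≤ t) := by
    intro i
    rw [abs_mul, abs_inv, abs_of_pos ht, inv_mul_le_iff₀ ht, mul_one]
  have h2 : ∑ i, (t⁻¹ * (v i : ℝ)) * Matrix.vecCons (1:ℝ) x i = t⁻¹ * dotT x v := by
    rw [dotT, Finset.mul_sum]; exact Finset.sum_congr rfl fun i _ => by ring
  show _ ∧ |∑ i, (t⁻¹ * (v i : ℝ)) * Matrix.vecCons (1:ℝ) x i| ≤ _ ↔ _
  rw [h2, abs_mul, abs_inv, abs_of_pos ht, inv_mul_le_iff₀ ht]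
  exact and_congr (forall_congr' h1) Iff.rfl

lemma lambda1_eq (x : Fin n → ℝ) (q : ℝ) : lambda1 (bodyC x q) = sInf (Sset x q) := by
  unfold lambda1 Sset
  congr 1
  ext t
  simp only [Set.mem_setOf_eq]
  constructor
  · rintro ⟨ht, v, hv, hm⟩
    exact ⟨ht, v, hv, (mem_smul_body_iff ht v).mp hm⟩
  · rintro ⟨ht, v, hv, hm⟩
    exact ⟨ht, v, hv, (mem_smul_body_iff ht v).mpr hm⟩

lemma Sset_nonempty (x : Fin n → ℝ) (q : ℝ) : (Sset x q).Nonempty := by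
  refine ⟨Real.exp q + 1, by positivity, fun i => if i = 0 then 1 else 0, ?_, ?_, ?_⟩
  · intro h
    have := congrFun h 0
    simp at this
  · intro i
    by_cases hi : i = 0 <;> simp [hi] <;> positivity
  · have : dotT x (fun i => if i = 0 then 1 else 0) = 1 := by
      rw [dotT_eq]
      simp [Fin.succ_ne_zero]
    rw [this, add_mul, ← Real.exp_add, add_neg_cancel, Real.exp_zero, abs_one]
    have := (Real.exp_pos (-q)).le
    linarith

lemma one_le_of_mem_Sset {x : Fin n → ℝ} {q t : ℝ} (h : t ∈ Sset x q) : 1 ≤ t := by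
  obtain ⟨ht, v, hv, hb, -⟩ := h
  obtain ⟨i, hi⟩ := Function.ne_iff.mp hv
  calc (1:ℝ) ≤ |(v i : ℝ)| := by
        rw [← Int.cast_abs]
        exact_mod_cast Int.one_le_abs (by simpa using hi)
    _ ≤ t := hb i

lemma one_le_lambda1 (x : Fin n → ℝ) (q : ℝ) : 1 ≤ lambda1 (bodyC x q) := by
  rw [lambda1_eq]
  exact le_csInf (Sset_nonempty x q) fun t ht => one_le_of_mem_Sset ht

lemma lambda1_le {x : Fin n → ℝ} {q t : ℝ} (h : t ∈ Sset x q) : lambda1 (bodyC x q) ≤ t := by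
  rw [lambda1_eq]
  exact csInf_le ⟨1, fun s hs => one_le_of_mem_Sset hs⟩ h

lemma exists_of_lambda1_lt {x : Fin n → ℝ} {q c : ℝ} (h : lambda1 (bodyC x q) < c) :
    ∃ v : Fin (n+1) → ℤ, v ≠ 0 ∧ (∀ i, |(v i:ℝ)| ≤ c) ∧ |dotT x v| ≤ c * Real.exp (-q) := by
  rw [lambda1_eq] at h
  obtain ⟨t, ht, htc⟩ := exists_lt_of_csInf_lt (Sset_nonempty x q) h
  obtain ⟨htpos, v, hv, hb, hd⟩ := ht
  exact ⟨v, hv, fun i => (hb i).trans htc.le,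
    hd.trans (mul_le_mul_of_nonneg_right htc.le (Real.exp_pos _).le)⟩

lemma dirichlet (hn : 0 < n) (x : Fin n → ℝ) : HasExp x (n : ℝ) := by
  intro Q₀
  set N : ℕ := ⌊max Q₀ 2⌋₊ + 1 with hN
  have hN2 : 2 ≤ N := by
    have : 2 ≤ ⌊max Q₀ 2⌋₊ := Nat.le_floor (by exact_mod_cast le_max_right Q₀ 2)
    omega
  set M : ℕ := (N + 1) ^ n - 1 with hM
  have hMN : N ^ n ≤ M := by
    have h1 : N ^ n < (N + 1) ^ n := Nat.pow_lt_pow_left (by omega) hn.ne'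
    omega
  have hMpos : 0 < M := lt_of_lt_of_le (Nat.pow_pos (by omega) : 0 < N ^ n) hMN
  set g : (Fin n → Fin (N + 1)) → ℝ := fun a => ∑ i, x i * (a i : ℝ) with hg
  have hF : ∀ a : Fin n → Fin (N + 1), (⌊Int.fract (g a) * M⌋).toNat < M := by
    intro a
    have h1 : Int.fract (g a) * M < M := by
      have := Int.fract_lt_one (g a)
      calc Int.fract (g a) * M < 1 * M := by
            exact mul_lt_mul_of_pos_right this (by exact_mod_cast hMpos)
        _ = M := one_mul _
    have : ⌊Int.fract (g a) * M⌋ < (M : ℤ) := Int.floor_lt.mpr (by exact_mod_cast h1)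
    omega
  set F : (Fin n → Fin (N + 1)) → Fin M := fun a => ⟨(⌊Int.fract (g a) * M⌋).toNat, hF a⟩ with hFdef
  have hcard : Fintype.card (Fin M) < Fintype.card (Fin n → Fin (N + 1)) := by
    simp only [Fintype.card_fin, Fintype.card_fun]
    omega
  obtain ⟨a, b, hab, hFab⟩ := Fintype.exists_ne_map_eq_of_card_lt F hcard
  have hfloor : ⌊Int.fract (g a) * M⌋ = ⌊Int.fract (g b) * M⌋ := by
    have ha : (0:ℤ) ≤ ⌊Int.fract (g a) * M⌋ :=
      Int.floor_nonneg.mpr (mul_nonneg (Int.fract_nonneg _) (Nat.cast_nonneg _))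
    have hb : (0:ℤ) ≤ ⌊Int.fract (g b) * M⌋ :=
      Int.floor_nonneg.mpr (mul_nonneg (Int.fract_nonneg _) (Nat.cast_nonneg _))
    have := congrArg (Fin.val) hFab
    simp only [hFdef] at this
    omega
  have hclose : |Int.fract (g a) - Int.fract (g b)| < 1 / M := by
    have hMR : (0:ℝ) < M := by exact_mod_cast hMpos
    have la := Int.floor_le (Int.fract (g a) * M)
    have lb := Int.floor_le (Int.fract (g b) * M)
    have ua := Int.lt_floor_add_one (Int.fract (g a) * M)
    have ub := Int.lt_floor_add_one (Int.fract (g b) * M)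
    rw [hfloor] at la ua
    rw [abs_sub_lt_iff]
    constructor
    · rw [lt_div_iff₀ hMR, sub_mul]; linarith
    · rw [lt_div_iff₀ hMR, sub_mul]; linarith
  set q : Fin n → ℤ := fun i => (a i : ℤ) - (b i : ℤ) with hq
  have hq0 : q ≠ 0 := by
    intro h
    apply hab
    funext i
    have := congrFun h i
    simp only [hq, Pi.zero_apply, sub_eq_zero] at this
    exact Fin.ext (by exact_mod_cast this)
  have hdot : dotIZ x q = g a - g b := by
    simp only [dotIZ, hq, hg]
    rw [← Finset.sum_sub_distrib]
    refine Finset.sum_congr rfl fun i _ => ?_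
    push_cast
    ring
  refine ⟨(N:ℝ), ?_, ?_, q, hq0, ?_, ?_⟩
  · calc Q₀ ≤ max Q₀ 2 := le_max_left _ _
      _ < ⌊max Q₀ 2⌋₊ + 1 := Nat.lt_floor_add_one _
      _ = (N:ℝ) := by push_cast [hN]; ring
  · exact_mod_cast hN2.trans_lt' one_lt_two
  · rw [maxNorm_le_iff _ _ (by positivity)]
    intro i
    have h1 : (a i : ℝ) ≤ N := by
      have := (a i).is_lt; push_cast; exact_mod_cast Nat.lt_succ_iff.mp (by exact_mod_cast this)
    have h2 : (b i : ℝ) ≤ N := by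
      have := (b i).is_lt; push_cast; exact_mod_cast Nat.lt_succ_iff.mp (by exact_mod_cast this)
    have h3 : (0:ℝ) ≤ (a i : ℝ) := by positivity
    have h4 : (0:ℝ) ≤ (b i : ℝ) := by positivity
    rw [hq]
    push_cast at h1 h2 ⊢
    rw [abs_sub_le_iff]
    constructor <;> linarith
  · have step1 : nint (dotIZ x q) ≤ |Int.fract (g a) - Int.fract (g b)| := by
      have := nint_le (dotIZ x q) (⌊g a⌋ - ⌊g b⌋)
      refine this.trans_eq ?_
      rw [hdot]
      congr 1
      rw [Int.fract, Int.fract]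
      push_cast
      ring
    have step2 : (1:ℝ) / M ≤ (N:ℝ) ^ (-(n:ℝ)) := by
      rw [Real.rpow_neg (by positivity), Real.rpow_natCast]
      rw [div_le_iff₀ (by exact_mod_cast hMpos), inv_mul_eq_div, le_div_iff₀ (by positivity)]
      rw [one_mul]
      exact_mod_cast hMN
    exact (step1.trans hclose.le).trans step2

lemma liminf_lower {x : Fin n → ℝ} {w : ℝ} (hw : 0 < w) (h : ¬ HasExp x w) :
    ENNReal.ofReal (1/(1+w)) ≤
      Filter.liminf (fun t : ℝ => ENNReal.ofReal (Lx1 x t / t)) Filter.atTop := by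
  unfold HasExp at h
  push_neg at h
  obtain ⟨Q₀, hQ₀⟩ := h
  have h1w : (0:ℝ) < 1 + w := by linarith
  set T₀ : ℝ := max 1 ((1+w) * (Real.log (max Q₀ 2) + 1)) with hT₀
  have hEv : ∀ᶠ t in Filter.atTop, ENNReal.ofReal (1/(1+w)) ≤ ENNReal.ofReal (Lx1 x t / t) := by
    filter_upwards [Filter.eventually_ge_atTop T₀] with t ht
    apply ENNReal.ofReal_le_ofReal
    have htpos : (0:ℝ) < t := lt_of_lt_of_le one_pos ((le_max_left _ _).trans ht)
    set c : ℝ := Real.exp (t/(1+w)) with hc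
    have hclam : c ≤ lambda1 (bodyC x t) := by
      by_contra hlt
      push_neg at hlt
      obtain ⟨v, hv0, hb, hd⟩ := exists_of_lambda1_lt hlt
      set q : Fin n → ℤ := fun i => v i.succ with hqdef
      have hdT : dotT x v = (v 0 : ℝ) + dotIZ x q := by
        rw [dotT_eq]
        congr 1
        unfold dotIZ
        exact Finset.sum_congr rfl fun i _ => mul_comm _ _
      have hce : c * Real.exp (-t) = Real.exp (t/(1+w) - t) := by
        rw [hc, ← Real.exp_add]
        ring_nf
      by_cases hq : q = 0
      · have hv00 : v 0 ≠ 0 := by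
          intro h0
          apply hv0
          funext i
          refine Fin.cases ?_ ?_ i
          · exact h0
          · intro j
            exact congrFun hq j
        have h1le : (1:ℝ) ≤ |dotT x v| := by
          rw [hdT, hq]
          have : dotIZ x (0 : Fin n → ℤ) = 0 := by simp [dotIZ]
          rw [this, add_zero, ← Int.cast_abs]
          exact_mod_cast Int.one_le_abs hv00
        have hlt1 : c * Real.exp (-t) < 1 := by
          rw [hce, Real.exp_lt_one_iff]
          have : t / (1+w) < t := div_lt_self htpos (by linarith)
          linarith
        linarith [hd, h1le]
      · have hcpos : (0:ℝ) < c := Real.exp_pos _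
        have hlogt : Real.log (max Q₀ 2) + 1 ≤ t / (1+w) := by
          rw [le_div_iff₀ h1w]
          calc (Real.log (max Q₀ 2) + 1) * (1+w) = (1+w) * (Real.log (max Q₀ 2) + 1) := by ring
            _ ≤ T₀ := le_max_right _ _
            _ ≤ t := ht
        have hQgt : Q₀ < c := by
          calc Q₀ ≤ max Q₀ 2 := le_max_left _ _
            _ = Real.exp (Real.log (max Q₀ 2)) := (Real.exp_log (by positivity)).symm
            _ < c := by
                rw [hc]
                apply Real.exp_lt_exp.mpr
                linarith
        have h1c : 1 < c := by
          rw [hc, Real.one_lt_exp_iff]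
          exact div_pos htpos h1w
        have hmax : maxNorm q ≤ c := by
          rw [maxNorm_le_iff _ _ hcpos.le]
          intro i
          exact hb i.succ
        have hnint : nint (dotIZ x q) ≤ c ^ (-w) := by
          calc nint (dotIZ x q) ≤ |dotIZ x q - ((-(v 0) : ℤ) : ℝ)| := nint_le _ _
            _ = |dotT x v| := by
                rw [hdT]
                congr 1
                push_cast
                ring
            _ ≤ c * Real.exp (-t) := hd
            _ = c ^ (-w) := by
                rw [hce, Real.rpow_def_of_pos hcpos, hc, Real.log_exp]
                congr 1
                field_simp
                ring
        exact absurd hnint (not_le.mpr (hQ₀ c hQgt h1c q hq hmax))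
    have hL : t/(1+w) ≤ Lx1 x t := by
      have hlog : Real.log c ≤ Real.log (lambda1 (bodyC x t)) :=
        Real.log_le_log (Real.exp_pos _) hclam
      rw [hc, Real.log_exp] at hlog
      exact hlog
    rw [le_div_iff₀ htpos]
    calc 1/(1+w) * t = t/(1+w) := by ring
      _ ≤ Lx1 x t := hL
  exact Filter.le_liminf_of_le (by isBoundedDefault) hEv

lemma liminf_upper {x : Fin n → ℝ} {w : ℝ} (hw : 0 < w) (h : HasExp x w)
    {ε : ℝ} (hε : 0 < ε) :
    Filter.liminf (fun t : ℝ => ENNReal.ofReal (Lx1 x t / t)) Filter.atTop ≤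
      ENNReal.ofReal (1/(1+w) + ε) := by
  have h1w : (0:ℝ) < 1 + w := by linarith
  set C : ℝ := (∑ i, |x i|) + 2 with hC
  have hC2 : (2:ℝ) ≤ C := by
    have : 0 ≤ ∑ i, |x i| := Finset.sum_nonneg (fun i _ => abs_nonneg _)
    rw [hC]; linarith
  have hCpos : (0:ℝ) < C := by linarith
  refine Filter.liminf_le_of_frequently_le ?_ (by isBoundedDefault)
  rw [Filter.frequently_atTop]
  intro T
  obtain ⟨Q, hQgt, hQ1, q, hq0, hmax, hnint⟩ :=
    h (max (Real.exp T) (Real.exp (Real.log C / ((1+w)*ε))))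
  have hQT : Real.exp T < Q := lt_of_le_of_lt (le_max_left _ _) hQgt
  have hQC : Real.exp (Real.log C / ((1+w)*ε)) < Q := lt_of_le_of_lt (le_max_right _ _) hQgt
  have hQpos : (0:ℝ) < Q := lt_trans one_pos hQ1
  have hlogQ : (0:ℝ) < Real.log Q := Real.log_pos hQ1
  set t : ℝ := (1+w) * Real.log Q with htdef
  have htpos : (0:ℝ) < t := mul_pos h1w hlogQ
  have hTt : T ≤ t := by
    have hTlog : T < Real.log Q := by
      rw [← Real.log_exp T]
      exact Real.log_lt_log (Real.exp_pos _) hQT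
    calc T ≤ Real.log Q := hTlog.le
      _ ≤ (1+w) * Real.log Q := le_mul_of_one_le_left hlogQ.le (by linarith)
  refine ⟨t, hTt, ?_⟩
  apply ENNReal.ofReal_le_ofReal
  set r : ℝ := dotIZ x q with hr
  set v : Fin (n+1) → ℤ := Matrix.vecCons (-(round r)) q with hv
  have hv0 : v 0 = -(round r) := rfl
  have hvs : ∀ i : Fin n, v i.succ = q i := fun i => rfl
  have hsum : ∑ i, ((v i.succ : ℤ) : ℝ) * x i = r := by
    rw [hr]
    unfold dotIZ
    refine Finset.sum_congr rfl fun i _ => ?_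
    rw [hvs i]
    ring
  have hdT : dotT x v = r - (round r : ℝ) := by
    rw [dotT_eq, hsum, hv0]
    push_cast
    ring
  have hmem : C * Q ∈ Sset x t := by
    refine ⟨by positivity, v, ?_, ?_, ?_⟩
    · intro h0
      obtain ⟨i, hi⟩ := Function.ne_iff.mp hq0
      apply hi
      have := congrFun h0 i.succ
      rw [hvs i] at this
      simpa using this
    · intro i
      refine Fin.cases ?_ ?_ i
      · rw [hv0]
        push_cast
        rw [abs_neg]
        have h1 : |r - (round r : ℝ)| ≤ 1/2 := abs_sub_round r
        have h2 : |r| ≤ (∑ i, |x i|) * Q := by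
          refine le_trans (abs_dotIZ_le x q) ?_
          exact mul_le_mul_of_nonneg_left hmax (Finset.sum_nonneg fun i _ => abs_nonneg _)
        have h3 : |(round r : ℝ)| - |r| ≤ |(round r : ℝ) - r| := abs_sub_abs_le_abs_sub _ _
        rw [abs_sub_comm] at h3
        have h4 : (1:ℝ) ≤ Q := hQ1.le
        have h5 : C * Q = (∑ i, |x i|) * Q + 2 * Q := by rw [hC]; ring
        nlinarith
      · intro i
        rw [hvs i]
        calc |(q i:ℝ)| ≤ maxNorm q := abs_le_maxNorm q i
          _ ≤ Q := hmax
          _ ≤ C * Q := le_mul_of_one_le_left hQpos.le (by linarith)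
    · rw [hdT]
      have hnn : |r - (round r : ℝ)| = nint r := rfl
      rw [hnn]
      have hexp : Real.exp (-t) = Q ^ (-(1+w)) := by
        rw [Real.rpow_def_of_pos hQpos, htdef]
        congr 1
        ring
      have hQQ : Q * Q ^ (-(1+w)) = Q ^ (-w) := by
        nth_rewrite 1 [← Real.rpow_one Q]
        rw [← Real.rpow_add hQpos]
        congr 1
        ring
      calc nint r ≤ Q ^ (-w) := hnint
        _ = 1 * (Q * Q ^ (-(1+w))) := by rw [hQQ, one_mul]
        _ ≤ C * (Q * Q ^ (-(1+w))) := by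
            apply mul_le_mul_of_nonneg_right (by linarith)
            positivity
        _ = C * Q * Real.exp (-t) := by rw [hexp]; ring
  have hlam : lambda1 (bodyC x t) ≤ C * Q := lambda1_le hmem
  have hlam1 : (1:ℝ) ≤ lambda1 (bodyC x t) := one_le_lambda1 x t
  have hL : Lx1 x t ≤ Real.log C + Real.log Q := by
    unfold Lx1
    calc Real.log (lambda1 (bodyC x t)) ≤ Real.log (C*Q) :=
          Real.log_le_log (by linarith) hlam
      _ = Real.log C + Real.log Q := Real.log_mul hCpos.ne' hQpos.ne'
  rw [div_le_iff₀ htpos]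
  have hlogCQ : Real.log C ≤ (1+w) * ε * Real.log Q := by
    have h6 : Real.log C / ((1+w)*ε) < Real.log Q := by
      rw [← Real.log_exp (Real.log C / ((1+w)*ε))]
      exact Real.log_lt_log (Real.exp_pos _) hQC
    rw [div_lt_iff₀ (by positivity)] at h6
    nlinarith
  calc Lx1 x t ≤ Real.log C + Real.log Q := hL
    _ ≤ (1+w)*ε*Real.log Q + Real.log Q := by linarith
    _ = (1/(1+w) + ε) * t := by
        rw [htdef]
        field_simp
        ring

end AuxLemmas

/-- `liminf_{q→∞} L_{x,1}(q)/q = 1/(1 + ω(x))`, with the convention `1/(1+∞) = 0`. -/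
theorem liminf_Lx1_div (n : ℕ) (hn : 0 < n) (x : Fin n → ℝ) :
    Filter.liminf (fun q : ℝ => ENNReal.ofReal (Lx1 x q / q)) Filter.atTop =
      1 / (1 + omegaExp x) := by
  classical
  set A := Filter.liminf (fun q : ℝ => ENNReal.ofReal (Lx1 x q / q)) Filter.atTop with hA
  set W : Set ℝ := {w : ℝ | 0 < w ∧ HasExp x w} with hW
  have hnW : (n:ℝ) ∈ W := ⟨by exact_mod_cast hn, dirichlet hn x⟩
  have hWne : W.Nonempty := ⟨(n:ℝ), hnW⟩
  have hn1 : (1:ℝ) ≤ (n:ℝ) := by exact_mod_cast hn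
  have hupper : ∀ w ∈ W, ∀ ε : ℝ, 0 < ε → A ≤ ENNReal.ofReal (1/(1+w) + ε) := by
    rintro w ⟨hw, hexp⟩ ε hε
    exact liminf_upper hw hexp hε
  have hlower : ∀ w : ℝ, 0 < w → w ∉ W → ENNReal.ofReal (1/(1+w)) ≤ A := by
    intro w hw hwW
    refine liminf_lower hw fun hexp => hwW ⟨hw, hexp⟩
  by_cases hbdd : BddAbove W
  · set s := sSup W with hs
    have hns : (n:ℝ) ≤ s := le_csSup hbdd hnW
    have hspos : (0:ℝ) < s := lt_of_lt_of_le (by exact_mod_cast hn) hns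
    have h1s : (1:ℝ) ≤ s := hn1.trans hns
    have homega : omegaExp x = ENNReal.ofReal s := by
      unfold omegaExp
      rw [← hW]
      apply le_antisymm
      · apply sSup_le
        rintro a ⟨w, hwW, rfl⟩
        exact ENNReal.ofReal_le_ofReal (le_csSup hbdd hwW)
      · apply ENNReal.le_of_forall_pos_le_add
        intro ε hε _
        obtain ⟨w, hwW, hwgt⟩ := exists_lt_of_lt_csSup hWne
          (show s - (ε:ℝ) < s by have : (0:ℝ) < ε := hε; linarith)
        calc ENNReal.ofReal s ≤ ENNReal.ofReal (w + (ε:ℝ)) := by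
              apply ENNReal.ofReal_le_ofReal; linarith
          _ = ENNReal.ofReal w + ENNReal.ofReal (ε:ℝ) :=
              ENNReal.ofReal_add hwW.1.le (by positivity)
          _ ≤ sSup (ENNReal.ofReal '' W) + ε := by
              rw [ENNReal.ofReal_coe_nnreal]
              exact add_le_add (le_sSup (Set.mem_image_of_mem _ hwW)) le_rfl
    rw [homega]
    have hrhs : 1 / (1 + ENNReal.ofReal s) = ENNReal.ofReal (1/(1+s)) := by
      rw [show (1:ENNReal) + ENNReal.ofReal s = ENNReal.ofReal (1+s) by
            rw [ENNReal.ofReal_add zero_le_one hspos.le, ENNReal.ofReal_one],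
        one_div, one_div, ENNReal.ofReal_inv_of_pos (by linarith)]
    rw [hrhs]
    apply le_antisymm
    · apply ENNReal.le_of_forall_pos_le_add
      intro ε hε _
      have hεR : (0:ℝ) < (ε:ℝ) := hε
      obtain ⟨w, hwW, hwgt⟩ := exists_lt_of_lt_csSup hWne
        (show s - (ε:ℝ)/2 < s by linarith)
      have hwpos : (0:ℝ) < w := hwW.1
      have h1 : A ≤ ENNReal.ofReal (1/(1+w) + (ε:ℝ)/2) := hupper w hwW _ (by linarith)
      have h2 : 1/(1+w) + (ε:ℝ)/2 ≤ 1/(1+s) + (ε:ℝ) := by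
        have hws : w ≤ s := le_csSup hbdd hwW
        have e1 : (0:ℝ) < 1 + w := by linarith
        have e2 : (0:ℝ) < 1 + s := by linarith
        have key : 1/(1+w) - 1/(1+s) = (s - w)/((1+w)*(1+s)) := by
          rw [div_sub_div _ _ e1.ne' e2.ne']
          congr 1
          ring
        have key2 : (s - w)/((1+w)*(1+s)) ≤ s - w := by
          have h3 : (1:ℝ) ≤ (1+w)*(1+s) := by nlinarith
          have h4 : (0:ℝ) ≤ s - w := by linarith
          calc (s - w)/((1+w)*(1+s)) ≤ (s - w)/1 := by
                apply div_le_div_of_nonneg_left h4 ?_ h3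
                · linarith
            _ = s - w := div_one _
        have h5 : s - w < (ε:ℝ)/2 := by linarith
        linarith
      calc A ≤ ENNReal.ofReal (1/(1+w) + (ε:ℝ)/2) := h1
        _ ≤ ENNReal.ofReal (1/(1+s) + (ε:ℝ)) := ENNReal.ofReal_le_ofReal h2
        _ = ENNReal.ofReal (1/(1+s)) + ENNReal.ofReal (ε:ℝ) := by
            apply ENNReal.ofReal_add (by positivity) hεR.le
        _ = ENNReal.ofReal (1/(1+s)) + ε := by rw [ENNReal.ofReal_coe_nnreal]
    · apply ENNReal.le_of_forall_pos_le_add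
      intro ε hε _
      have hεR : (0:ℝ) < (ε:ℝ) := hε
      set w : ℝ := s + (ε:ℝ) with hwdef
      have hwpos : (0:ℝ) < w := by rw [hwdef]; linarith
      have hwW : w ∉ W := by
        intro hmem
        have := le_csSup hbdd hmem
        rw [hwdef] at this
        linarith
      have h1 : ENNReal.ofReal (1/(1+w)) ≤ A := hlower w hwpos hwW
      have h2 : 1/(1+s) ≤ 1/(1+w) + (ε:ℝ) := by
        have e1 : (0:ℝ) < 1 + w := by linarith
        have e2 : (0:ℝ) < 1 + s := by linarith
        have key : 1/(1+s) - 1/(1+w) = (w - s)/((1+s)*(1+w)) := by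
          rw [div_sub_div _ _ e2.ne' e1.ne']
          congr 1
          ring
        have key2 : (w - s)/((1+s)*(1+w)) ≤ w - s := by
          have h3 : (1:ℝ) ≤ (1+s)*(1+w) := by nlinarith
          have h4 : (0:ℝ) ≤ w - s := by rw [hwdef]; linarith
          calc (w - s)/((1+s)*(1+w)) ≤ (w - s)/1 := by
                apply div_le_div_of_nonneg_left h4 ?_ h3
                · linarith
            _ = w - s := div_one _
        have h5 : w - s = (ε:ℝ) := by rw [hwdef]; ring
        linarith
      calc ENNReal.ofReal (1/(1+s)) ≤ ENNReal.ofReal (1/(1+w) + (ε:ℝ)) :=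
            ENNReal.ofReal_le_ofReal h2
        _ = ENNReal.ofReal (1/(1+w)) + ENNReal.ofReal (ε:ℝ) := by
            apply ENNReal.ofReal_add (by positivity) hεR.le
        _ ≤ A + ε := by
            rw [ENNReal.ofReal_coe_nnreal]
            exact add_le_add h1 le_rfl
  · rw [not_bddAbove_iff] at hbdd
    have homega : omegaExp x = ⊤ := by
      unfold omegaExp
      rw [← hW, sSup_eq_top]
      intro b hb
      obtain ⟨w, hwW, hwgt⟩ := hbdd (max b.toReal 0)
      refine ⟨ENNReal.ofReal w, ⟨w, hwW, rfl⟩, ?_⟩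
      rw [ENNReal.lt_ofReal_iff_toReal_lt hb.ne]
      exact lt_of_le_of_lt (le_max_left _ _) hwgt
    rw [homega]
    have hrhs : 1 / (1 + (⊤:ENNReal)) = 0 := by simp
    rw [hrhs]
    rw [← le_zero_iff]
    apply ENNReal.le_of_forall_pos_le_add
    intro ε hε _
    have hεR : (0:ℝ) < (ε:ℝ) := hε
    obtain ⟨w, hwW, hwgt⟩ := hbdd (2/(ε:ℝ))
    have hwpos : (0:ℝ) < w := hwW.1
    have h1 : A ≤ ENNReal.ofReal (1/(1+w) + (ε:ℝ)/2) := hupper w hwW _ (by linarith)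
    have h2 : 1/(1+w) + (ε:ℝ)/2 ≤ (ε:ℝ) := by
      have e1 : (0:ℝ) < 1 + w := by linarith
      have h3 : 1/(1+w) ≤ (ε:ℝ)/2 := by
        rw [div_le_div_iff₀ e1 (by norm_num : (0:ℝ) < 2)]
        have : 2/(ε:ℝ) < w := hwgt
        rw [div_lt_iff₀ hεR] at this
        nlinarith
      linarith
    calc A ≤ ENNReal.ofReal (1/(1+w) + (ε:ℝ)/2) := h1
      _ ≤ ENNReal.ofReal (ε:ℝ) := ENNReal.ofReal_le_ofReal h2
      _ = 0 + ε := by rw [ENNReal.ofReal_coe_nnreal, zero_add]
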